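/- Let q be a prime power, let d ≥ 2, let K := 𝔽_{q^{d+1}} and regard 𝔽_q as a subfield of K; let tr : K → 𝔽_q be the field trace. Let A := Kˣ/𝔽_qˣ (a cyclic group of order N = (q^{d+1}−1)/(q−1), written multiplicatively) and let D ⊆ A be the image of {x ∈ Kˣ : tr(x) = 0} under the canonical projection Kˣ → A (this is well defined since tr(cx) = c·tr(x) for c ∈ 𝔽_qˣ, so having trace zero is constant on cosets). Then |D| = (q^d−1)/(q−1), and D is a Singer difference set: for every non-identity g ∈ A, the number of ordered pairs (X,Y) ∈ D×D with X·Y⁻¹ = g equals (q^{d−1}−1)/(q−1). -/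

import Mathlib

open scoped Classical

lemma aux_card_image {G : Type*} [CommGroup G] [Fintype G] (H : Subgroup G)
    (S : Finset G) (hS : ∀ x ∈ S, ∀ h : H, x * (h : G) ∈ S) :
    S.card = (S.image (fun x => (QuotientGroup.mk x : G ⧸ H))).card * Nat.card H := by
  classical
  rw [Finset.card_eq_sum_card_image (fun x => (QuotientGroup.mk x : G ⧸ H)) S]
  rw [Finset.sum_congr rfl (fun b hb => ?_), Finset.sum_const, smul_eq_mul]
  obtain ⟨x, hxS, hxb⟩ := Finset.mem_image.mp hb
  have : S.filter (fun y => (QuotientGroup.mk y : G ⧸ H) = b)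
      = Finset.univ.image (fun h : H => x * (h : G)) := by
    ext y
    simp only [Finset.mem_filter, Finset.mem_image, Finset.mem_univ, true_and]
    constructor
    · rintro ⟨hyS, hyb⟩
      have hxy : (QuotientGroup.mk x : G ⧸ H) = QuotientGroup.mk y := hxb.trans hyb.symm
      rw [QuotientGroup.eq] at hxy
      exact ⟨⟨x⁻¹ * y, hxy⟩, by group⟩
    · rintro ⟨h, rfl⟩
      refine ⟨hS x hxS h, ?_⟩
      rw [← hxb]
      have : (QuotientGroup.mk (h : G) : G ⧸ H) = 1 := by
        rw [QuotientGroup.eq_one_iff]; exact h.2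
      rw [QuotientGroup.mk_mul, this, mul_one]
  rw [this, Finset.card_image_of_injective _ (fun a b hab => ?_), Finset.card_univ,
    Nat.card_eq_fintype_card]
  exact Subtype.ext (mul_left_cancel hab)

lemma aux_units_count {F K : Type*} [Field F] [Field K] [Algebra F K] [Fintype F] [Fintype K]
    (W : Submodule F K) :
    (Finset.univ.filter (fun x : Kˣ => (x : K) ∈ W)).card
      = Fintype.card F ^ (Module.finrank F W) - 1 := by
  classical
  rw [← Module.card_eq_pow_finrank (K := F) (V := W)]
  rw [← Fintype.card_subtype]
  have e : {x : Kˣ // (x : K) ∈ W} ≃ {y : W // (y : K) ≠ 0} :=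
    { toFun := fun x => ⟨⟨(x : Kˣ), x.2⟩, (x : Kˣ).ne_zero⟩
      invFun := fun y => ⟨Units.mk0 (y : W) y.2, by simp⟩
      left_inv := fun x => by ext; simp
      right_inv := fun y => by ext; simp }
  rw [Fintype.card_congr e]
  have h1 : Fintype.card {y : W // ¬ ((y : K) ≠ 0)} = 1 := by
    rw [Fintype.card_eq_one_iff]
    refine ⟨⟨0, by simp⟩, fun y => ?_⟩
    ext
    have := y.2
    push_neg at this
    simpa using this
  have h2 := Fintype.card_subtype_compl (fun y : W => (y : K) ≠ 0)
  have h3 := Fintype.card_subtype_le (fun y : W => (y : K) ≠ 0)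
  omega

theorem singer_difference_set
    (q d : ℕ) (hq : ∃ p r : ℕ, p.Prime ∧ 0 < r ∧ q = p ^ r) (hd : 2 ≤ d)
    {F K : Type*} [Field F] [Field K] [Algebra F K] [Fintype F] [Fintype K]
    (hF : Fintype.card F = q) (hK : Fintype.card K = q ^ (d + 1))
    (H : Subgroup Kˣ)
    (hH : H = (Units.map ((algebraMap F K : F →+* K) : F →* K)).range)
    (D : Finset (Kˣ ⧸ H))
    (hD : ∀ X : Kˣ ⧸ H, X ∈ D ↔
      ∃ x : Kˣ, Algebra.trace F K (x : K) = 0 ∧ (QuotientGroup.mk x : Kˣ ⧸ H) = X) :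
    D.card = (q ^ d - 1) / (q - 1) ∧
      ∀ g : Kˣ ⧸ H, g ≠ 1 →
        ((D ×ˢ D).filter (fun p => p.1 * p.2⁻¹ = g)).card
          = (q ^ (d - 1) - 1) / (q - 1) := by
  classical
  obtain ⟨p, r, hp, hr, hqpr⟩ := hq
  have hq1 : 1 < q := by
    subst hqpr
    exact Nat.one_lt_pow (by omega) hp.one_lt
  haveI : FiniteDimensional F K := inferInstance
  have hrank : Module.finrank F K = d + 1 := by
    have h1 : q ^ Module.finrank F K = q ^ (d + 1) := by
      rw [← hK, Module.card_eq_pow_finrank (K := F) (V := K), hF]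
    exact Nat.pow_right_injective hq1 h1
  set tr : K →ₗ[F] F := Algebra.trace F K with htr
  have hnd : ∀ a : K, (∀ x : K, tr (a * x) = 0) → a = 0 := fun a ha =>
    (traceForm_nondegenerate F K).1 a (fun x => by simpa [Algebra.traceForm_apply] using ha x)
  have hsurjtr : Function.Surjective tr := by
    have hexist : ∃ t : K, tr t ≠ 0 := by
      by_contra hcon
      push_neg at hcon
      exact one_ne_zero (hnd 1 (fun x => by simpa using hcon x))
    obtain ⟨t, ht⟩ := hexist
    intro c
    refine ⟨(c / tr t) • t, ?_⟩
    rw [map_smul, smul_eq_mul]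
    field_simp
  -- card of H
  have hHcard : Nat.card H = q - 1 := by
    have hinj : Function.Injective (Units.map ((algebraMap F K : F →+* K) : F →* K)) :=
      Units.map_injective (algebraMap F K).injective
    rw [hH, Nat.card_congr (MonoidHom.ofInjective hinj).toEquiv.symm,
      Nat.card_eq_fintype_card, Fintype.card_units, hF]
  -- membership in submodules is invariant along H-cosets
  have hmem : ∀ (W : Submodule F K) (x h : Kˣ), h ∈ H →
      (((x * h : Kˣ) : K) ∈ W ↔ (x : K) ∈ W) := by
    intro W x h hh
    rw [hH] at hh
    obtain ⟨u, rfl⟩ := hh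
    have hval : ((x * Units.map ((algebraMap F K : F →+* K) : F →* K) u : Kˣ) : K)
        = (u : F) • (x : K) := by
      simp [Algebra.smul_def, mul_comm]
    rw [hval, W.smul_mem_iff (Units.ne_zero u)]
  have hcoset : ∀ (W : Submodule F K) (x y : Kˣ),
      (QuotientGroup.mk x : Kˣ ⧸ H) = QuotientGroup.mk y → ((x : K) ∈ W ↔ (y : K) ∈ W) := by
    intro W x y hxy
    rw [QuotientGroup.eq] at hxy
    have := hmem W x (x⁻¹ * y) hxy
    simpa using this.symm
  have hq1' : 0 < q - 1 := by omega
  -- Part 1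
  set W₀ : Submodule F K := LinearMap.ker tr with hW₀
  have hrank₀ : Module.finrank F W₀ = d := by
    rw [hW₀]
    have h1 := LinearMap.finrank_range_add_finrank_ker tr
    rw [LinearMap.range_eq_top.mpr hsurjtr, finrank_top, Module.finrank_self, hrank] at h1
    omega
  set S₀ : Finset Kˣ := Finset.univ.filter (fun x : Kˣ => (x : K) ∈ W₀) with hS₀
  have hDim : D = S₀.image (fun x => (QuotientGroup.mk x : Kˣ ⧸ H)) := by
    ext X
    rw [hD]
    simp only [hS₀, Finset.mem_image, Finset.mem_filter, Finset.mem_univ, true_and, hW₀,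
      LinearMap.mem_ker]
  have hS₀card : S₀.card = q ^ d - 1 := by
    rw [hS₀, aux_units_count W₀, hrank₀, hF]
  have hcount₀ : S₀.card = D.card * (q - 1) := by
    rw [hDim, ← hHcard]
    exact aux_card_image H S₀ (fun x hx h => by
      simp only [hS₀, Finset.mem_filter, Finset.mem_univ, true_and] at hx ⊢
      exact (hmem W₀ x h h.2).mpr hx)
  have hcard₁ : D.card = (q ^ d - 1) / (q - 1) := by
    rw [← hS₀card, hcount₀, Nat.mul_div_cancel _ hq1']
  refine ⟨hcard₁, ?_⟩
  -- Part 2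
  intro g hg
  obtain ⟨a, rfl⟩ := QuotientGroup.mk_surjective g
  set L : K →ₗ[F] F × F := LinearMap.prod tr (tr ∘ₗ LinearMap.mulLeft F (a : K)) with hL
  have hLker : ∀ y : K, y ∈ LinearMap.ker L ↔ (tr y = 0 ∧ tr ((a : K) * y) = 0) := by
    intro y
    simp [hL, LinearMap.mem_ker, Prod.ext_iff]
  have hLsurj : Function.Surjective L := by
    rw [← LinearMap.range_eq_top]
    by_contra hcon
    obtain ⟨φ, hφ0, hφ⟩ := Submodule.exists_dual_map_eq_bot_of_lt_top
      (lt_top_iff_ne_top.mpr hcon) inferInstance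
    have hφL : ∀ x : K, φ (L x) = 0 := by
      intro x
      have : φ (L x) ∈ (LinearMap.range L).map φ := ⟨L x, ⟨x, rfl⟩, rfl⟩
      rw [hφ] at this
      exact (Submodule.mem_bot F).mp this
    set c₁ : F := φ (1, 0) with hc₁
    set c₂ : F := φ (0, 1) with hc₂
    have hφuv : ∀ u v : F, φ (u, v) = u * c₁ + v * c₂ := by
      intro u v
      have : (u, v) = u • ((1 : F), (0 : F)) + v • ((0 : F), (1 : F)) := by
        simp [Prod.ext_iff]
      rw [this, map_add, map_smul, map_smul, smul_eq_mul, smul_eq_mul]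
    have hcne : ¬(c₁ = 0 ∧ c₂ = 0) := by
      rintro ⟨h1, h2⟩
      apply hφ0
      refine LinearMap.ext fun x => ?_
      have := hφuv x.1 x.2
      simp only [h1, h2, mul_zero, add_zero] at this
      simpa using this
    have hbz : algebraMap F K c₁ + algebraMap F K c₂ * (a : K) = 0 := by
      apply hnd
      intro x
      have h1 := hφL x
      rw [hL] at h1
      simp only [LinearMap.prod_apply, Pi.prod, LinearMap.comp_apply,
        LinearMap.mulLeft_apply] at h1
      rw [hφuv] at h1
      have : tr ((algebraMap F K c₁ + algebraMap F K c₂ * (a : K)) * x)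
          = tr x * c₁ + tr ((a : K) * x) * c₂ := by
        rw [add_mul, mul_assoc]
        rw [map_add]
        have e1 : algebraMap F K c₁ * x = c₁ • x := (Algebra.smul_def c₁ x).symm
        have e2 : algebraMap F K c₂ * ((a : K) * x) = c₂ • ((a : K) * x) :=
          (Algebra.smul_def c₂ _).symm
        rw [e1, e2, map_smul, map_smul, smul_eq_mul, smul_eq_mul]
        ring
      rw [this]; exact h1
    rcases eq_or_ne c₂ 0 with h2 | h2
    · apply hcne
      refine ⟨?_, h2⟩
      rw [h2, map_zero, zero_mul, add_zero] at hbz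
      exact (algebraMap F K).injective (by simpa using hbz)
    · apply hg
      have h2K : algebraMap F K c₂ ≠ 0 := fun h0 =>
        h2 ((algebraMap F K).injective (by simpa using h0))
      have hae : (a : K) = algebraMap F K (-c₁ / c₂) := by
        rw [map_div₀, map_neg, eq_div_iff h2K]
        linear_combination hbz
      have hane : (-c₁ / c₂ : F) ≠ 0 := by
        intro h0
        rw [h0, map_zero] at hae
        exact Units.ne_zero a hae
      rw [QuotientGroup.eq_one_iff, hH]
      refine ⟨Units.mk0 (-c₁ / c₂) hane, ?_⟩
      ext
      simpa using hae.symm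
  -- kernel dimension d - 1
  have hrank₁ : Module.finrank F (LinearMap.ker L) = d - 1 := by
    have h1 := LinearMap.finrank_range_add_finrank_ker L
    rw [LinearMap.range_eq_top.mpr hLsurj, finrank_top, hrank] at h1
    have h2 : Module.finrank F (F × F) = 2 := by
      rw [Module.finrank_prod, Module.finrank_self]
    rw [h2] at h1
    omega
  set W₁ : Submodule F K := LinearMap.ker L with hW₁
  set S₁ : Finset Kˣ := Finset.univ.filter (fun x : Kˣ => (x : K) ∈ W₁) with hS₁
  set T : Finset (Kˣ ⧸ H) := D.filter
    (fun Y => (QuotientGroup.mk a : Kˣ ⧸ H) * Y ∈ D) with hT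
  -- pairs ↔ T
  have hpairs : ((D ×ˢ D).filter
      (fun p => p.1 * p.2⁻¹ = (QuotientGroup.mk a : Kˣ ⧸ H))).card = T.card := by
    apply Finset.card_bij (fun p _ => p.2)
    · rintro ⟨X, Y⟩ hp
      simp only [Finset.mem_filter, Finset.mem_product] at hp
      obtain ⟨⟨hX, hY⟩, hXY⟩ := hp
      have : X = (QuotientGroup.mk a : Kˣ ⧸ H) * Y := by
        rw [← hXY, inv_mul_cancel_right]
      rw [hT, Finset.mem_filter]
      exact ⟨hY, this ▸ hX⟩
    · rintro ⟨X₁, Y₁⟩ h₁ ⟨X₂, Y₂⟩ h₂ h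
      simp only [Finset.mem_filter, Finset.mem_product] at h₁ h₂
      simp only at h
      subst h
      have : X₁ = X₂ := by
        rw [← inv_mul_cancel_right X₁ Y₁, h₁.2, ← h₂.2, inv_mul_cancel_right]
      simp [this]
    · intro Y hY
      rw [hT, Finset.mem_filter] at hY
      refine ⟨((QuotientGroup.mk a : Kˣ ⧸ H) * Y, Y), ?_, rfl⟩
      simp only [Finset.mem_filter, Finset.mem_product]
      refine ⟨⟨hY.2, hY.1⟩, by rw [mul_inv_cancel_right]⟩
  -- T is the image of S₁
  have hTim : T = S₁.image (fun x => (QuotientGroup.mk x : Kˣ ⧸ H)) := by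
    ext X
    simp only [hT, Finset.mem_filter, hD, hS₁, Finset.mem_image, Finset.mem_univ, true_and]
    constructor
    · rintro ⟨⟨x, hx0, rfl⟩, ⟨z, hz0, hz⟩⟩
      refine ⟨x, ?_, rfl⟩
      rw [hW₁, hLker]
      refine ⟨hx0, ?_⟩
      have hmkz : (QuotientGroup.mk z : Kˣ ⧸ H) = QuotientGroup.mk (a * x) := by
        rw [hz, QuotientGroup.mk_mul]
      have := (hcoset (LinearMap.ker tr) z (a * x) hmkz).mp (by simpa using hz0)
      simpa using this
    · rintro ⟨x, hx, rfl⟩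
      rw [hW₁, hLker] at hx
      refine ⟨⟨x, hx.1, rfl⟩, ⟨a * x, by simpa using hx.2, by rw [QuotientGroup.mk_mul]⟩⟩
  have hS₁card : S₁.card = q ^ (d - 1) - 1 := by
    rw [hS₁, aux_units_count W₁, hW₁, hrank₁, hF]
  have hcount₁ : S₁.card = T.card * (q - 1) := by
    rw [hTim, ← hHcard]
    exact aux_card_image H S₁ (fun x hx h => by
      simp only [hS₁, Finset.mem_filter, Finset.mem_univ, true_and] at hx ⊢
      exact (hmem W₁ x h h.2).mpr hx)
  rw [hpairs, ← Nat.mul_div_cancel T.card hq1', ← hcount₁, hS₁card]
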